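/- arXiv:2308.03308 — 4 statements merged into one kernel-verified Lean document; each statement's English description precedes it below -/
import Mathlib

section
/- Let A be an OCA with k states and let K = lcm{1, …, k}. If a CTL+Sync formula ψ is (t, p)-periodic with respect to A, where p ≥ 1, then the formula EX ψ is (t + p, K·p)-periodic with respect to A. -/
/-- A transition of a one-counter automaton: source state, guard
(`false` = "=0", `true` = ">0"), counter effect, target state. -/
abbrev OTrans (St : Type) := St × Bool × ℤ × St

/-- A one-counter automaton over states `St` and atomic propositions `AP`. -/
structure OCA (St AP : Type) where
  delta : Set (OTrans St)
  label : St → AP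
  effect_mem : ∀ t ∈ delta, t.2.2.1 = -1 ∨ t.2.2.1 = 0 ∨ t.2.2.1 = 1
  eq0_effect : ∀ t ∈ delta, t.2.1 = false → t.2.2.1 = 0 ∨ t.2.2.1 = 1
  total_eq0 : ∀ s : St, ∃ e s', (s, false, e, s') ∈ delta
  total_gt0 : ∀ s : St, ∃ e s', (s, true, e, s') ∈ delta

namespace OCA

variable {St AP : Type}

/-- One step of the OCA via a given transition. -/
def StepVia (A : OCA St AP) (t : OTrans St) (c c' : St × ℕ) : Prop :=
  t ∈ A.delta ∧ t.1 = c.1 ∧ t.2.2.2 = c'.1 ∧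
    (if t.2.1 then 0 < c.2 else c.2 = 0) ∧ (c'.2 : ℤ) = (c.2 : ℤ) + t.2.2.1

/-- One step of the OCA. -/
def Step (A : OCA St AP) (c c' : St × ℕ) : Prop := ∃ t, A.StepVia t c c'

/-- Reachability in exactly `n` steps: `(s,v) ⇝^n (s',v')`. -/
def ReachN (A : OCA St AP) : ℕ → St × ℕ → St × ℕ → Prop
  | 0, c, c' => c = c'
  | n + 1, c, c' => ∃ c'', A.Step c c'' ∧ A.ReachN n c'' c'

end OCA

/-- CTL+Sync formulas. -/
inductive CTLSync (AP : Type) : Type where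
  | tt : CTLSync AP
  | atom : AP → CTLSync AP
  | and : CTLSync AP → CTLSync AP → CTLSync AP
  | not : CTLSync AP → CTLSync AP
  | EX : CTLSync AP → CTLSync AP
  | EU : CTLSync AP → CTLSync AP → CTLSync AP
  | AU : CTLSync AP → CTLSync AP → CTLSync AP
  | UA : CTLSync AP → CTLSync AP → CTLSync AP
  | UE : CTLSync AP → CTLSync AP → CTLSync AP

/-- Satisfaction of CTL+Sync formulas over an arbitrary transition system
given by a step relation and a state labelling. -/
def SatTS {C AP : Type} (step : C → C → Prop) (label : C → AP) :
    CTLSync AP → C → Prop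
  | .tt, _ => True
  | .atom q, c => label c = q
  | .and φ ψ, c => SatTS step label φ c ∧ SatTS step label ψ c
  | .not φ, c => ¬ SatTS step label φ c
  | .EX φ, c => ∃ c', step c c' ∧ SatTS step label φ c'
  | .EU φ ψ, c => ∃ τ : ℕ → C, τ 0 = c ∧ (∀ i, step (τ i) (τ (i + 1))) ∧
      ∃ k, SatTS step label ψ (τ k) ∧ ∀ j < k, SatTS step label φ (τ j)
  | .AU φ ψ, c => ∀ τ : ℕ → C, τ 0 = c → (∀ i, step (τ i) (τ (i + 1))) →
      ∃ k, SatTS step label ψ (τ k) ∧ ∀ j < k, SatTS step label φ (τ j)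
  | .UA φ ψ, c => ∃ k, ∀ τ : ℕ → C, τ 0 = c → (∀ i < k, step (τ i) (τ (i + 1))) →
      SatTS step label ψ (τ k) ∧ ∀ j < k, SatTS step label φ (τ j)
  | .UE φ ψ, c => ∃ k, ∀ j < k, ∃ τ : ℕ → C, τ 0 = c ∧
      (∀ i < k, step (τ i) (τ (i + 1))) ∧
      SatTS step label φ (τ j) ∧ SatTS step label ψ (τ k)

/-- Satisfaction of a CTL+Sync formula at a configuration of an OCA. -/
def OCA.Sat {St AP : Type} (A : OCA St AP) (φ : CTLSync AP) (c : St × ℕ) : Prop :=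
  SatTS A.Step (fun c => A.label c.1) φ c

/-- `φ` is `(t, p)`-periodic with respect to `A`. -/
def Periodic {St AP : Type} (A : OCA St AP) (φ : CTLSync AP) (t p : ℕ) : Prop :=
  ∀ (s : St) (v v' : ℕ), t < v → t < v' → v % p = v' % p →
    (A.Sat φ (s, v) ↔ A.Sat φ (s, v'))

/-- `lcm {1, …, N}`. -/
def lcmTo (N : ℕ) : ℕ := (Finset.Icc 1 N).lcm id


lemma EX_periodic_aux {St AP : Type} (A : OCA St AP)
    (ψ : CTLSync AP) (t p : ℕ) (hp : 1 ≤ p) (h : Periodic A ψ t p)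
    (s : St) (v v' : ℕ) (hv : t + p < v) (hv' : t + p < v')
    (hm : v % p = v' % p) :
    A.Sat (CTLSync.EX ψ) (s, v) → A.Sat (CTLSync.EX ψ) (s, v') := by
  rintro ⟨⟨s1, w⟩, ⟨⟨src, g, e, tgt⟩, htr, hsrc, htgt, hguard, heff⟩, hsat⟩
  simp only at hsrc htgt hguard heff
  subst hsrc htgt
  have he3 : e = -1 ∨ e = 0 ∨ e = 1 := A.effect_mem _ htr
  -- the guard must be `true` since v > 0
  have hg : g = true := by
    cases g with
    | false => simp at hguard; omega
    | true => rfl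
  subst hg
  -- new counter value
  have hnn : (0 : ℤ) ≤ (v' : ℤ) + e := by omega
  refine ⟨(tgt, ((v' : ℤ) + e).toNat), ⟨(src, true, e, tgt), htr, rfl, rfl, ?_, ?_⟩, ?_⟩
  · simp only [if_true]; omega
  · simp only
    rw [Int.toNat_of_nonneg hnn]
  · -- use periodicity of ψ
    have hw' : (((v' : ℤ) + e).toNat : ℤ) = (v' : ℤ) + e := Int.toNat_of_nonneg hnn
    have hmp : (v : ℤ) % (p : ℤ) = (v' : ℤ) % (p : ℤ) := by exact_mod_cast hm
    have hmod2 : (w : ℤ) % (p : ℤ) = (((v' : ℤ) + e).toNat : ℤ) % (p : ℤ) := by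
      rw [heff, hw']
      exact Int.ModEq.add_right e hmp
    have hmodN : w % p = ((v' : ℤ) + e).toNat % p := by exact_mod_cast hmod2
    have htw : t < w := by omega
    have htw' : t < ((v' : ℤ) + e).toNat := by omega
    exact (h tgt w _ htw htw' hmodN).mp hsat

/-- If `ψ` is `(t, p)`-periodic w.r.t. an OCA `A` with `k`
states and `K = lcm {1, …, k}`, then `EX ψ` is `(t + p, K·p)`-periodic. -/
theorem EX_periodic {St AP : Type} [Fintype St] (A : OCA St AP)
    (ψ : CTLSync AP) (t p : ℕ) (hp : 1 ≤ p) (h : Periodic A ψ t p) :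
    Periodic A (CTLSync.EX ψ) (t + p) (lcmTo (Fintype.card St) * p) := by
  intro s v v' hv hv' hmod
  have hdvd : p ∣ lcmTo (Fintype.card St) * p := dvd_mul_left p _
  have hm : v % p = v' % p := Nat.ModEq.of_dvd hdvd hmod
  exact ⟨EX_periodic_aux A ψ t p hp h s v v' hv hv' hm,
    EX_periodic_aux A ψ t p hp h s v' v hv' hv hm.symm⟩
end

section
/- Let b ≥ 1, let e₁, e₂ be integers and ℓ₁, ℓ₂ naturals with 1 ≤ ℓᵢ ≤ b and |eᵢ| ≤ ℓᵢ for i = 1, 2, and suppose e₁·ℓ₂ < e₂·ℓ₁ (i.e., e₁/ℓ₁ < e₂/ℓ₂). Let x be a positive multiple of lcm{1, …, 2b²}. Then there exist integers k₁, k₂ with |k₁| ≤ b·x, |k₂| ≤ b·x, k₁·e₁ + k₂·e₂ = 0, and k₁·ℓ₁ + k₂·ℓ₂ = x. -/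
/-- Cycle combination for lengths: if `e₁/ℓ₁ < e₂/ℓ₂` with
`1 ≤ ℓᵢ ≤ b` and `|eᵢ| ≤ ℓᵢ`, and `x` is a positive multiple of
`lcm {1, …, 2b²}`, then there are integers `k₁, k₂` with `|kᵢ| ≤ b·x` such that
adding `kᵢ` repetitions of cycle `i` (removing when negative) changes the total
length by exactly `x` and the total effect by `0`. -/
theorem cycle_combination_for_length (b : ℕ) (hb : 1 ≤ b)
    (e₁ e₂ : ℤ) (ℓ₁ ℓ₂ : ℕ)
    (hℓ₁ : 1 ≤ ℓ₁) (hℓ₁b : ℓ₁ ≤ b) (hℓ₂ : 1 ≤ ℓ₂) (hℓ₂b : ℓ₂ ≤ b)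
    (he₁ : |e₁| ≤ (ℓ₁ : ℤ)) (he₂ : |e₂| ≤ (ℓ₂ : ℤ))
    (h12 : e₁ * (ℓ₂ : ℤ) < e₂ * (ℓ₁ : ℤ))
    (x : ℕ) (hx : 0 < x) (hdvd : lcmTo (2 * b ^ 2) ∣ x) :
    ∃ k₁ k₂ : ℤ, |k₁| ≤ (b : ℤ) * (x : ℤ) ∧ |k₂| ≤ (b : ℤ) * (x : ℤ) ∧
      k₁ * e₁ + k₂ * e₂ = 0 ∧ k₁ * (ℓ₁ : ℤ) + k₂ * (ℓ₂ : ℤ) = (x : ℤ) := by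
  set d : ℤ := e₂ * (ℓ₁ : ℤ) - e₁ * (ℓ₂ : ℤ) with hd_def
  have hd_pos : 0 < d := by omega
  -- bound d ≤ 2 b^2
  have hab1 : |e₁| * (ℓ₂ : ℤ) ≤ (ℓ₁ : ℤ) * (ℓ₂ : ℤ) := by
    apply mul_le_mul_of_nonneg_right he₁ (by positivity)
  have hab2 : |e₂| * (ℓ₁ : ℤ) ≤ (ℓ₂ : ℤ) * (ℓ₁ : ℤ) := by
    apply mul_le_mul_of_nonneg_right he₂ (by positivity)
  have h1 : e₁ * (ℓ₂ : ℤ) ≥ -((ℓ₁ : ℤ) * ℓ₂) := by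
    have := neg_abs_le e₁
    nlinarith [abs_nonneg e₁]
  have h2 : e₂ * (ℓ₁ : ℤ) ≤ (ℓ₂ : ℤ) * ℓ₁ := by
    have := le_abs_self e₂
    nlinarith
  have hd_le : d ≤ 2 * (ℓ₁ : ℤ) * ℓ₂ := by rw [hd_def]; linarith
  have hℓb : (ℓ₁ : ℤ) * ℓ₂ ≤ (b : ℤ) * b := by
    have h1 : (ℓ₁ : ℤ) ≤ b := by exact_mod_cast hℓ₁b
    have h2 : (ℓ₂ : ℤ) ≤ b := by exact_mod_cast hℓ₂b
    nlinarith [Int.ofNat_le.2 hℓ₁, Int.ofNat_le.2 hℓ₂]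
  have hdN : d.toNat ∈ Finset.Icc 1 (2 * b ^ 2) := by
    rw [Finset.mem_Icc]
    constructor
    · omega
    · have h1 : d ≤ 2 * (b : ℤ) ^ 2 := by nlinarith
      have h2 : ((2 * b ^ 2 : ℕ) : ℤ) = 2 * (b : ℤ) ^ 2 := by push_cast; ring
      omega
  have hdvd' : d.toNat ∣ x := dvd_trans (Finset.dvd_lcm (f := id) hdN) hdvd
  obtain ⟨t, ht⟩ := hdvd'
  have hdt1 : 1 ≤ d.toNat := by omega
  have ht_le : t ≤ x := by
    calc t = 1 * t := (one_mul t).symm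
    _ ≤ d.toNat * t := Nat.mul_le_mul_right t hdt1
    _ = x := ht.symm
  refine ⟨e₂ * t, -e₁ * t, ?_, ?_, by ring, ?_⟩
  · rw [abs_mul]
    have h2 : (ℓ₂ : ℤ) ≤ b := by exact_mod_cast hℓ₂b
    have htx : (t : ℤ) ≤ (x : ℤ) := by exact_mod_cast ht_le
    have htnn : (0 : ℤ) ≤ t := Int.ofNat_nonneg t
    have habs : |(t : ℤ)| = (t : ℤ) := abs_of_nonneg htnn
    rw [habs]
    calc |e₂| * (t : ℤ) ≤ (ℓ₂ : ℤ) * t := mul_le_mul_of_nonneg_right he₂ htnn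
    _ ≤ (b : ℤ) * x := mul_le_mul h2 htx htnn (by positivity)
  · rw [abs_mul, abs_neg]
    have h1 : (ℓ₁ : ℤ) ≤ b := by exact_mod_cast hℓ₁b
    have htx : (t : ℤ) ≤ (x : ℤ) := by exact_mod_cast ht_le
    have htnn : (0 : ℤ) ≤ t := Int.ofNat_nonneg t
    have habs : |(t : ℤ)| = (t : ℤ) := abs_of_nonneg htnn
    rw [habs]
    calc |e₁| * (t : ℤ) ≤ (ℓ₁ : ℤ) * t := mul_le_mul_of_nonneg_right he₁ htnn
    _ ≤ (b : ℤ) * x := mul_le_mul h1 htx htnn (by positivity)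
  · have hx' : (x : ℤ) = d * t := by
      have : (d.toNat : ℤ) = d := Int.toNat_of_nonneg hd_pos.le
      rw [ht]; push_cast [this]; ring
    rw [hx', hd_def]; ring
end

section
/- For every natural number b ≥ 2, lcm{1, 2, …, 2b³} > b¹¹. -/
lemma lcmTo_ne_zero (N : ℕ) : lcmTo N ≠ 0 := by
  unfold lcmTo
  rw [Ne, Finset.lcm_eq_zero_iff]
  intro h
  obtain ⟨x, hx, hx0⟩ := h
  simp only [id] at hx0
  subst hx0
  simp at hx

lemma centralBinom_dvd_lcmTo (n : ℕ) (hn : 0 < n) : Nat.centralBinom n ∣ lcmTo (2 * n) := by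
  rw [← Nat.factorization_le_iff_dvd (Nat.centralBinom_ne_zero n) (lcmTo_ne_zero _)]
  intro p
  by_cases hp : p.Prime
  · set k := (Nat.centralBinom n).factorization p with hk
    have hle : p ^ k ≤ 2 * n := Nat.pow_factorization_choose_le (by omega)
    have hdvd : p ^ k ∣ lcmTo (2 * n) := by
      have hmem : p ^ k ∈ Finset.Icc 1 (2 * n) := by
        refine Finset.mem_Icc.2 ⟨Nat.one_le_iff_ne_zero.2 (pow_ne_zero _ hp.pos.ne'), hle⟩
      simpa [lcmTo] using Finset.dvd_lcm (f := id) hmem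
    exact (Nat.Prime.pow_dvd_iff_le_factorization hp (lcmTo_ne_zero _)).1 hdvd
  · simp [Nat.factorization_eq_zero_of_not_prime _ hp]

lemma pow14_lt_four_pow (b : ℕ) (hb : 2 ≤ b) : 2 * b ^ 14 < 4 ^ (b ^ 3) := by
  have h1 : b ≤ 2 ^ (b - 1) := by
    have := Nat.lt_two_pow_self (n := b - 1)
    calc b = (b - 1) + 1 := by omega
    _ ≤ 2 ^ (b - 1) := Nat.succ_le_of_lt Nat.lt_two_pow_self
  have h2 : b ^ 14 ≤ 2 ^ (14 * (b - 1)) := by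
    calc b ^ 14 ≤ (2 ^ (b - 1)) ^ 14 := Nat.pow_le_pow_left h1 14
    _ = 2 ^ (14 * (b - 1)) := by rw [← pow_mul, mul_comm]
  have h3 : 14 * (b - 1) + 1 < 2 * b ^ 3 := by
    obtain ⟨c, rfl⟩ : ∃ c, b = c + 2 := ⟨b - 2, by omega⟩
    have hc : c + 2 - 1 = c + 1 := rfl
    rw [hc]
    have hexp : 2 * (c + 2) ^ 3 = 2 * c ^ 3 + 12 * c ^ 2 + 24 * c + 16 := by ring
    rw [hexp]
    linarith [Nat.zero_le (c ^ 3), Nat.zero_le (c ^ 2)]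
  calc 2 * b ^ 14 ≤ 2 * 2 ^ (14 * (b - 1)) := Nat.mul_le_mul_left _ h2
  _ = 2 ^ (14 * (b - 1) + 1) := by rw [pow_succ]; ring
  _ < 2 ^ (2 * b ^ 3) := Nat.pow_lt_pow_right (by norm_num) h3
  _ = 4 ^ (b ^ 3) := by
    rw [show (4:ℕ) = 2 ^ 2 by norm_num, ← pow_mul]

/-- For every `b ≥ 2`, `lcm {1, …, 2b³} > b¹¹`. -/
theorem lcm_up_to_two_b_cubed_gt (b : ℕ) (hb : 2 ≤ b) :
    b ^ 11 < lcmTo (2 * b ^ 3) := by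
  have hn : 0 < b ^ 3 := by positivity
  have hdvd := centralBinom_dvd_lcmTo (b ^ 3) hn
  have hlcm : Nat.centralBinom (b ^ 3) ≤ lcmTo (2 * b ^ 3) :=
    Nat.le_of_dvd (Nat.pos_of_ne_zero (lcmTo_ne_zero _)) hdvd
  have h4 : 4 ^ (b ^ 3) ≤ 2 * b ^ 3 * Nat.centralBinom (b ^ 3) :=
    Nat.four_pow_le_two_mul_self_mul_centralBinom _ hn
  have hkey : b ^ 11 < Nat.centralBinom (b ^ 3) := by
    by_contra h
    push_neg at h
    have : 4 ^ (b ^ 3) ≤ 2 * b ^ 3 * b ^ 11 :=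
      h4.trans (Nat.mul_le_mul_left _ h)
    have h2 : 2 * b ^ 3 * b ^ 11 = 2 * b ^ 14 := by ring
    have h3 := pow14_lt_four_pow b hb
    omega
  exact hkey.trans_le hlcm
end

section
/- Let τ be a basic path of A, or a prefix of a basic path, valid from a configuration whose counter value is v > cT, let ℓ be the length of τ, and let i ∈ {0, 1, …, m}. If ℓ < 𝔰_{i+1}(v) and some counter value along τ is at most T′, then i ≥ 1 and τ contains, as a contiguous infix, β^{b⁴·P} (that is, b⁴·P consecutive repetitions of β) for some cycle β of length at most b whose slope equals 𝑒_j for some index 1 ≤ j ≤ i (in particular the slope of β is negative and at most 𝑒ᵢ). -/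
/-- Consecutiveness of transitions: the target of one is the source of the next. -/
def ChainRel {St : Type} (t t' : OTrans St) : Prop := t.2.2.2 = t'.1

namespace OCA

variable {St AP : Type}

/-- Executing a list of transitions from a configuration (all guards satisfied). -/
def RunsTo (A : OCA St AP) : List (OTrans St) → St × ℕ → St × ℕ → Prop
  | [], c, c' => c = c'
  | t :: ts, c, c' => ∃ c'', A.StepVia t c c'' ∧ A.RunsTo ts c'' c'

end OCA

/-- A nonempty chained list of transitions whose first source equals its last target. -/
def IsCycle {St : Type} (β : List (OTrans St)) : Prop :=
  β ≠ [] ∧ List.Chain' ChainRel β ∧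
    β.head?.map (fun t => t.1) = β.getLast?.map (fun t => t.2.2.2)

/-- A linear path scheme `α₀ β₁* α₁ ⋯ β_k* α_k`:
`head` is `α₀` and `segs` is the list of pairs `(βᵢ, αᵢ)`. -/
structure LPS (St : Type) where
  head : List (OTrans St)
  segs : List (List (OTrans St) × List (OTrans St))

/-- The flattening `α₀ β₁ α₁ ⋯ β_k α_k` of an LPS. -/
def LPS.flat {St : Type} (π : LPS St) : List (OTrans St) :=
  π.head ++ (π.segs.map (fun p => p.1 ++ p.2)).flatten

/-- The size of an LPS is the number of cycles `k`. -/
def LPS.size {St : Type} (π : LPS St) : ℕ := π.segs.length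

/-- `π` is an LPS of the OCA `A`: its flattening is a transition path of `A`
and every `βᵢ` is a cycle. -/
def OCA.IsLPS {St AP : Type} (A : OCA St AP) (π : LPS St) : Prop :=
  (∀ t ∈ π.flat, t ∈ A.delta) ∧ List.Chain' ChainRel π.flat ∧
    ∀ p ∈ π.segs, IsCycle p.1

/-- `c`-fold concatenation of a list with itself. -/
def listPow {α : Type} (β : List α) (c : ℕ) : List α := (List.replicate c β).flatten

/-- `τ` is `π`-shaped: `τ = α₀ β₁^{c₁} α₁ ⋯ β_k^{c_k} α_k` for some counts `cᵢ`. -/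
def LPS.Shaped {St : Type} (π : LPS St) (τ : List (OTrans St)) : Prop :=
  ∃ cs : List ℕ, cs.length = π.segs.length ∧
    τ = π.head ++ ((π.segs.zip cs).map (fun p => listPow p.1.1 p.2 ++ p.1.2)).flatten

/-- The effect of a list of transitions: the sum of the counter effects. -/
def effectOf {St : Type} (τ : List (OTrans St)) : ℤ := (τ.map (fun t => t.2.2.1)).sum

/-- The slope of a list of transitions: its effect divided by its length. -/
def slopeOf {St : Type} (τ : List (OTrans St)) : ℚ :=
  (effectOf τ : ℚ) / (τ.length : ℚ)

/-- The finite set of basic slopes with bound `b`: rationals `x / y` with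
`x ∈ ℤ`, `1 ≤ y ≤ b` and `|x| ≤ y`. -/
noncomputable def basicSlopes (b : ℕ) : Finset ℚ :=
  (((Finset.Icc (-(b : ℤ)) (b : ℤ)) ×ˢ (Finset.Icc 1 b)).image
    (fun p => (p.1 : ℚ) / (p.2 : ℚ))).filter (fun q => |q| ≤ 1)

/-- The increasing enumeration `𝑒₁ < 𝑒₂ < ⋯` of all basic slopes (1-indexed;
out-of-range indices yield the junk value `0`). -/
noncomputable def slopeE (b : ℕ) (i : ℕ) : ℚ := ((basicSlopes b).sort (· ≤ ·)).getD (i - 1) 0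

/-- The number `m` of negative basic slopes. -/
noncomputable def numNegSlopes (b : ℕ) : ℕ := ((basicSlopes b).filter (fun q => q < 0)).card

/-- `B = lcm {1, …, 2b³}`. -/
def lcmB (b : ℕ) : ℕ := (Finset.Icc 1 (2 * b ^ 3)).lcm id

/-- The period `P = B · P′`. -/
def bigP (b P' : ℕ) : ℕ := lcmB b * P'

/-- The segment threshold `sT = b⁹ · P`. -/
def sThresh (b P' : ℕ) : ℕ := b ^ 9 * bigP b P'

/-- The counter threshold `cT = b¹¹ · P`. -/
def cThresh (b P' : ℕ) : ℕ := b ^ 11 * bigP b P'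

/-- The start `𝔰ᵢ(v)` of Segment `i`: `𝔰₀(v) = 0` and, for `i ≥ 1`, writing
`−𝑒ᵢ = xᵢ/yᵢ` in lowest terms, `𝔰ᵢ(v) = ⌊yᵢ (v − T′) / xᵢ⌋ − b⁸·P`. -/
noncomputable def segStart (b T' P' v i : ℕ) : ℤ :=
  if i = 0 then 0
  else ⌊(((-(slopeE b i)).den : ℚ) * ((v : ℚ) - (T' : ℚ)) / ((-(slopeE b i)).num : ℚ))⌋
        - (b : ℤ) ^ 8 * (bigP b P' : ℤ)

/-- The core of a computation tree starting at counter value `v`: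
`⋃_{i=0}^{m} [𝔰ᵢ(v), 𝔰ᵢ(v) + sT)`. -/
def inCore (b T' P' v ℓ : ℕ) : Prop :=
  ∃ i ≤ numNegSlopes b,
    segStart b T' P' v i ≤ (ℓ : ℤ) ∧ (ℓ : ℤ) < segStart b T' P' v i + (sThresh b P' : ℤ)

/-- The largest index `i ∈ {0, …, m}` with `ℓ ∈ [𝔰ᵢ(v), 𝔰ᵢ(v) + sT)`. -/
noncomputable def shiftIdx (b T' P' v ℓ : ℕ) : ℕ :=
  Nat.findGreatest
    (fun i => segStart b T' P' v i ≤ (ℓ : ℤ) ∧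
      (ℓ : ℤ) < segStart b T' P' v i + (sThresh b P' : ℤ))
    (numNegSlopes b)

/-- The shift map between the cores of the trees from `v` and from `v + P`:
`shift(ℓ) = ℓ` on Segment `0` and `shift(ℓ) = ℓ + P·yᵢ/xᵢ` on Segment `i ≥ 1`. -/
noncomputable def shiftFn (b T' P' v ℓ : ℕ) : ℕ :=
  let i := shiftIdx b T' P' v ℓ
  if i = 0 then ℓ
  else ℓ + bigP b P' / (-(slopeE b i)).num.toNat * (-(slopeE b i)).den

/-- `u ≡ u′` w.r.t. threshold `T′` and period `P′`: either both are `≥ T′`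
and `P′` divides their difference, or both are `< T′` and they are equal. -/
def EquivTP (T' P' u u' : ℕ) : Prop :=
  (T' ≤ u ∧ T' ≤ u' ∧ (P' : ℤ) ∣ ((u : ℤ) - (u' : ℤ))) ∨ (u < T' ∧ u' < T' ∧ u = u')

/-- Every counter value along `τ`, executed from `c`, is strictly above `T`. -/
def OCA.CountersAbove {St AP : Type} (A : OCA St AP) (τ : List (OTrans St))
    (c : St × ℕ) (T : ℕ) : Prop :=
  ∀ σ c', σ <+: τ → A.RunsTo σ c c' → T < c'.2

/-- `τ` is a basic path of `A` (w.r.t. the LPS bound `b`) from configuration `c`: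
it is valid from `c` and `π`-shaped for some LPS of flat length at most `b`. -/
def OCA.IsBasic {St AP : Type} (A : OCA St AP) (b : ℕ) (τ : List (OTrans St))
    (c : St × ℕ) : Prop :=
  ∃ (π : LPS St) (c' : St × ℕ),
    A.IsLPS π ∧ π.flat.length ≤ b ∧ π.Shaped τ ∧ A.RunsTo τ c c'


section Aux

variable {St : Type}

lemma effectOf_append (x y : List (OTrans St)) :
    effectOf (x ++ y) = effectOf x + effectOf y := by
  simp [effectOf]

lemma listPow_succ {α : Type} (β : List α) (n : ℕ) :
    listPow β (n + 1) = β ++ listPow β n := by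
  simp [listPow, List.replicate_succ]

lemma listPow_add {α : Type} (β : List α) (a c : ℕ) :
    listPow β (a + c) = listPow β a ++ listPow β c := by
  induction a with
  | zero => simp [listPow]
  | succ a ih => rw [Nat.succ_add, listPow_succ, listPow_succ, ih, List.append_assoc]

lemma listPow_prefix {α : Type} (β : List α) {a n : ℕ} (h : a ≤ n) :
    listPow β a <+: listPow β n := by
  obtain ⟨c, rfl⟩ := Nat.exists_eq_add_of_le h
  rw [listPow_add]; exact List.prefix_append _ _

lemma length_listPow {α : Type} (β : List α) (n : ℕ) :
    (listPow β n).length = n * β.length := by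
  induction n with
  | zero => simp [listPow]
  | succ n ih => rw [listPow_succ]; simp [ih, Nat.succ_mul]; ring

lemma effectOf_listPow (β : List (OTrans St)) (n : ℕ) :
    effectOf (listPow β n) = n * effectOf β := by
  induction n with
  | zero => simp [listPow, effectOf]
  | succ n ih => rw [listPow_succ, effectOf_append, ih]; push_cast; ring

lemma effectOf_ge {l : List (OTrans St)} (h : ∀ t ∈ l, (-1 : ℤ) ≤ t.2.2.1) :
    -(l.length : ℤ) ≤ effectOf l := by
  induction l with
  | nil => simp [effectOf]
  | cons t l ih =>
    have h1 := h t (List.mem_cons_self)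
    have h2 := ih (fun t ht => h t (List.mem_cons_of_mem _ ht))
    simp only [effectOf, List.map_cons, List.sum_cons, List.length_cons] at *
    push_cast; omega

lemma effectOf_le {l : List (OTrans St)} (h : ∀ t ∈ l, t.2.2.1 ≤ (1 : ℤ)) :
    effectOf l ≤ (l.length : ℤ) := by
  induction l with
  | nil => simp [effectOf]
  | cons t l ih =>
    have h1 := h t (List.mem_cons_self)
    have h2 := ih (fun t ht => h t (List.mem_cons_of_mem _ ht))
    simp only [effectOf, List.map_cons, List.sum_cons, List.length_cons] at *
    push_cast; omega

lemma prefix_append_cases {α : Type} {x y σ : List α} (h : σ <+: x ++ y) :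
    σ <+: x ∨ ∃ q, σ = x ++ q ∧ q <+: y := by
  rcases List.prefix_or_prefix_of_prefix h (x.prefix_append y) with h1 | h1
  · exact Or.inl h1
  · obtain ⟨q, rfl⟩ := h1
    exact Or.inr ⟨q, rfl, (List.prefix_append_right_inj x).mp h⟩

lemma prefix_pow_append {α : Type} {β αl q : List α} {c : ℕ}
    (h : q <+: listPow β c ++ αl) :
    ∃ n r, n ≤ c ∧ q = listPow β n ++ r ∧ ((r <+: β ∧ n < c) ∨ r <+: αl) := by
  induction c generalizing q with
  | zero =>
    refine ⟨0, q, le_rfl, by simp [listPow], Or.inr ?_⟩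
    simpa [listPow] using h
  | succ c ih =>
    rw [listPow_succ, List.append_assoc] at h
    rcases prefix_append_cases h with h1 | ⟨q', rfl, h2⟩
    · exact ⟨0, q, Nat.zero_le _, by simp [listPow], Or.inl ⟨h1, Nat.succ_pos _⟩⟩
    · obtain ⟨n, r, hn, rfl, hr⟩ := ih h2
      refine ⟨n + 1, r, by omega, by rw [listPow_succ, List.append_assoc], ?_⟩
      rcases hr with ⟨h3, h4⟩ | h3
      · exact Or.inl ⟨h3, by omega⟩
      · exact Or.inr h3

lemma runsTo_counter {AP : Type} (A : OCA St AP) :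
    ∀ (σ : List (OTrans St)) (c c' : St × ℕ), A.RunsTo σ c c' →
      (c'.2 : ℤ) = (c.2 : ℤ) + effectOf σ := by
  intro σ
  induction σ with
  | nil => intro c c' h; cases h; simp [effectOf]
  | cons t l ih =>
    rintro c c' ⟨c'', ⟨_, _, _, _, hv⟩, hrest⟩
    have := ih c'' c' hrest
    simp only [effectOf, List.map_cons, List.sum_cons] at *
    omega

end Aux

section Master
variable {St : Type}

/-- Master decomposition of a prefix of a shaped suffix. -/
lemma master_decomp (zs : List ((List (OTrans St) × List (OTrans St)) × ℕ))
    (q : List (OTrans St))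
    (hq : q <+: (zs.map (fun z => listPow z.1.1 z.2 ++ z.1.2)).flatten)
    (hneg : ∀ t ∈ (zs.map (fun z => listPow z.1.1 z.2 ++ z.1.2)).flatten,
      (-1 : ℤ) ≤ t.2.2.1) :
    ∃ bl : List (List (OTrans St) × ℕ),
      bl.length ≤ zs.length ∧
      (∀ p ∈ bl, ∃ z ∈ zs, p.1 = z.1.1 ∧ p.2 ≤ z.2) ∧
      (∀ p ∈ bl, listPow p.1 p.2 <:+: q) ∧
      ((bl.map (fun p => (p.2 : ℤ) * effectOf p.1)).sum
        ≤ effectOf q + (zs.map (fun z => ((z.1.1.length : ℤ) + (z.1.2.length : ℤ)))).sum) ∧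
      ((bl.map (fun p => (p.2 : ℤ) * (p.1.length : ℤ))).sum ≤ (q.length : ℤ)) := by
  induction zs generalizing q with
  | nil =>
    simp only [List.map_nil, List.flatten_nil, List.prefix_nil] at hq
    subst hq
    exact ⟨[], by simp, by simp, by simp, by simp [effectOf], by simp⟩
  | cons z zs ih =>
    obtain ⟨⟨β, αl⟩, c⟩ := z
    simp only [List.map_cons, List.flatten_cons] at hq hneg
    rcases prefix_append_cases hq with h1 | ⟨q', rfl, h2⟩
    · -- q is a prefix of the first block
      obtain ⟨n, r, hn, rfl, hr⟩ := prefix_pow_append h1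
      refine ⟨[(β, n)], by simp, ?_, ?_, ?_, ?_⟩
      · rintro p hp; simp at hp; subst hp
        exact ⟨((β, αl), c), List.mem_cons_self, rfl, hn⟩
      · rintro p hp; simp at hp; subst hp
        exact (List.prefix_append _ _).isInfix
      · -- effect bound
        have hr' : -(r.length : ℤ) ≤ effectOf r := by
          apply effectOf_ge
          intro t ht
          apply hneg
          apply List.mem_append_left
          rcases hr with ⟨hr, hnc⟩ | hr
          · exact List.mem_append_left _ ((listPow_prefix β (by omega : 1 ≤ c)).subset
              (by simpa [listPow] using hr.subset ht))
          · exact List.mem_append_right _ (hr.subset ht)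
        have hrlen : (r.length : ℤ) ≤ (β.length : ℤ) + (αl.length : ℤ) := by
          rcases hr with ⟨hr, _⟩ | hr
          · have := hr.length_le; push_cast; omega
          · have := hr.length_le; push_cast; omega
        have hsum : (0:ℤ) ≤ (zs.map (fun z => ((z.1.1.length : ℤ) + (z.1.2.length : ℤ)))).sum := by
          apply List.sum_nonneg; intro x hx
          simp only [List.mem_map] at hx
          obtain ⟨w, _, rfl⟩ := hx; positivity
        rw [effectOf_append, effectOf_listPow]
        simp only [List.map_cons, List.map_nil, List.sum_cons, List.sum_nil, List.sum_cons]
        omega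
      · simp only [List.map_cons, List.map_nil, List.sum_cons, List.sum_nil,
          List.length_append, length_listPow]
        push_cast; nlinarith [r.length, (0:ℤ) ≤ (r.length:ℤ)]
    · -- q = (full first block) ++ q'
      obtain ⟨bl, hlen, hmem, hinf, heff, hlensum⟩ := ih q' h2
        (fun t ht => hneg t (List.mem_append_right _ ht))
      refine ⟨(β, c) :: bl, by simpa using hlen, ?_, ?_, ?_, ?_⟩
      · rintro p hp
        rcases List.mem_cons.mp hp with rfl | hp
        · exact ⟨((β, αl), c), List.mem_cons_self, rfl, le_rfl⟩
        · obtain ⟨w, hw, h⟩ := hmem p hp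
          exact ⟨w, List.mem_cons_of_mem _ hw, h⟩
      · rintro p hp
        rcases List.mem_cons.mp hp with rfl | hp
        · exact ((List.prefix_append _ _).trans (List.prefix_append _ _)).isInfix
        · exact (hinf p hp).trans ((List.suffix_append _ _).isInfix)
      · have hα : -(αl.length : ℤ) ≤ effectOf αl := by
          apply effectOf_ge
          intro t ht
          exact hneg t (List.mem_append_left _ (List.mem_append_right _ ht))
        simp only [List.map_cons, List.sum_cons]
        rw [effectOf_append, effectOf_append, effectOf_listPow]
        omega
      · simp only [List.map_cons, List.sum_cons, List.length_append, length_listPow]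
        push_cast
        omega
end Master

section Slopes

lemma getD_neg_of_lt_countP {l : List ℚ} (hs : l.Pairwise (· < ·)) {j : ℕ}
    (hj : j < l.countP (fun q => decide (q < 0))) : l.getD j 0 < 0 := by
  have hjl : j < l.length := lt_of_lt_of_le hj (List.countP_le_length)
  rw [List.getD_eq_getElem l 0 hjl]
  by_contra hc
  push_neg at hc
  have hdrop : (l.drop j).countP (fun q => decide (q < 0)) = 0 := by
    rw [List.countP_eq_zero]
    intro x hx
    obtain ⟨k, hk, rfl⟩ := List.mem_iff_getElem.mp hx
    simp only [List.getElem_drop, decide_eq_true_eq, not_lt]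
    have hjk : j + k < l.length := by
      have := hk; rw [List.length_drop] at this; omega
    have hle : l[j]'hjl ≤ l[j + k]'hjk := by
      rcases Nat.eq_zero_or_pos k with rfl | hkpos
      · simp
      · exact le_of_lt (List.pairwise_iff_getElem.mp hs j (j + k) hjl hjk (by omega))
    linarith
  have htd := List.countP_append (l₁ := l.take j) (l₂ := l.drop j) (p := fun q => decide (q < 0))
  rw [List.take_append_drop] at htd
  have h2 : (l.take j).countP (fun q => decide (q < 0)) ≤ j := by
    calc (l.take j).countP _ ≤ (l.take j).length := List.countP_le_length
    _ ≤ j := by simp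
  omega

lemma exists_index_of_neg {l : List ℚ} (hs : l.Pairwise (· < ·)) {q : ℚ}
    (hq : q ∈ l) (hneg : q < 0) :
    ∃ j, j < l.countP (fun q => decide (q < 0)) ∧ l.getD j 0 = q := by
  obtain ⟨k, hk, rfl⟩ := List.mem_iff_getElem.mp hq
  refine ⟨k, ?_, List.getD_eq_getElem l 0 hk⟩
  have htake : (l.take (k + 1)).countP (fun q => decide (q < 0)) =
      (l.take (k + 1)).length := by
    rw [List.countP_eq_length]
    intro x hx
    obtain ⟨t, ht, rfl⟩ := List.mem_iff_getElem.mp hx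
    rw [List.getElem_take] at *
    have ht' : t < k + 1 := by rw [List.length_take] at ht; omega
    have hle : l[t]'(by omega) ≤ l[k]'hk := by
      rcases Nat.lt_or_ge t k with h | h
      · exact le_of_lt (List.pairwise_iff_getElem.mp hs t k (by omega) hk h)
      · have : t = k := by omega
        subst this; rfl
    simp only [decide_eq_true_eq]
    linarith
  have htd := List.countP_append (l₁ := l.take (k + 1)) (l₂ := l.drop (k + 1)) (p := fun q => decide (q < 0))
  rw [List.take_append_drop] at htd
  have hlt : (l.take (k + 1)).length = k + 1 := by rw [List.length_take]; omega
  omega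

lemma getD_mono {l : List ℚ} (hs : l.Pairwise (· < ·)) {j k : ℕ}
    (hjk : j ≤ k) (hk : k < l.length) : l.getD j 0 ≤ l.getD k 0 := by
  rw [List.getD_eq_getElem l 0 hk, List.getD_eq_getElem l 0 (by omega)]
  rcases Nat.lt_or_ge j k with h | h
  · exact le_of_lt (List.pairwise_iff_getElem.mp hs j k (by omega) hk h)
  · have : j = k := by omega
    subst this; rfl

lemma finset_card_filter_eq_countP (s : Finset ℚ) (p : ℚ → Prop) [DecidablePred p] :
    (s.filter p).card = ((s.sort (· ≤ ·)).countP (fun a => decide (p a))) := by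
  have h1 : (s.filter p).card = Multiset.countP p s.1 :=
    (Multiset.countP_eq_card_filter _ _).symm
  have hperm : List.Perm (s.sort (· ≤ ·)) s.toList := Finset.sort_perm_toList _ _
  rw [h1, ← Finset.coe_toList s, Multiset.coe_countP, hperm.countP_eq]

lemma numNegSlopes_eq_countP (b : ℕ) :
    numNegSlopes b =
      ((basicSlopes b).sort (· ≤ ·)).countP (fun q => decide (q < 0)) :=
  finset_card_filter_eq_countP _ _

lemma mem_basicSlopes_of (b : ℕ) (x : ℤ) (y : ℕ) (hy1 : 1 ≤ y) (hyb : y ≤ b)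
    (hx : |x| ≤ (y : ℤ)) : ((x : ℚ) / (y : ℚ)) ∈ basicSlopes b := by
  unfold basicSlopes
  rw [Finset.mem_filter, Finset.mem_image]
  have hy0 : (0 : ℚ) < (y : ℚ) := by exact_mod_cast hy1
  constructor
  · refine ⟨(x, y), ?_, by push_cast; ring⟩
    rw [Finset.mem_product, Finset.mem_Icc, Finset.mem_Icc]
    rw [abs_le] at hx
    refine ⟨⟨by omega, by omega⟩, hy1, hyb⟩
  · rw [abs_div, abs_of_pos hy0, div_le_one hy0]
    exact_mod_cast (by exact_mod_cast hx : |(x : ℚ)| ≤ (y : ℚ))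

lemma abs_le_one_of_mem_basicSlopes {b : ℕ} {q : ℚ} (h : q ∈ basicSlopes b) :
    |q| ≤ 1 := by
  unfold basicSlopes at h
  rw [Finset.mem_filter] at h
  exact h.2

lemma den_le_of_mem_basicSlopes {b : ℕ} {q : ℚ} (h : q ∈ basicSlopes b) :
    q.den ≤ b := by
  unfold basicSlopes at h
  rw [Finset.mem_filter, Finset.mem_image] at h
  obtain ⟨⟨⟨x, y⟩, hmem, rfl⟩, -⟩ := h
  rw [Finset.mem_product, Finset.mem_Icc, Finset.mem_Icc] at hmem
  have hy1 : 1 ≤ y := hmem.2.1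
  show ((x : ℚ) / (y : ℚ)).den ≤ b
  have hdvd : ((((x : ℚ) / (y : ℚ)).den : ℤ)) ∣ (y : ℤ) := by
    have := Rat.den_dvd x y
    rwa [Rat.divInt_eq_div] at this
  have h2 : ((((x : ℚ) / (y : ℚ)).den : ℤ)) ≤ (y : ℤ) :=
    Int.le_of_dvd (by exact_mod_cast hy1) hdvd
  have h3 : (y : ℤ) ≤ (b : ℤ) := by exact_mod_cast hmem.2.2
  exact_mod_cast h2.trans h3

end Slopes

section Helpers
variable {St : Type}

lemma sum_map_add_int {α : Type} (l : List α) (f g : α → ℤ) :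
    (l.map (fun p => f p + g p)).sum = (l.map f).sum + (l.map g).sum := by
  induction l with
  | nil => simp
  | cons a l ih => simp only [List.map_cons, List.sum_cons, ih]; ring

lemma sum_map_mul_left_int {α : Type} (l : List α) (c : ℤ) (f : α → ℤ) :
    (l.map (fun p => c * f p)).sum = c * (l.map f).sum := by
  induction l with
  | nil => simp
  | cons a l ih => simp only [List.map_cons, List.sum_cons, ih]; ring

lemma sum_map_const_int {α : Type} (l : List α) (c : ℤ) :
    (l.map (fun _ => c)).sum = (l.length : ℤ) * c := by
  induction l with
  | nil => simp
  | cons a l ih => simp only [List.map_cons, List.sum_cons, ih, List.length_cons]; push_cast; ring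

lemma int_sum_map_len (l : List ((List (OTrans St) × List (OTrans St)) × ℕ)) :
    (l.map (fun z => ((z.1.1.length : ℤ) + (z.1.2.length : ℤ)))).sum
      = (((l.map (fun z => z.1.1.length + z.1.2.length)).sum : ℕ) : ℤ) := by
  induction l with
  | nil => simp
  | cons a l ih => simp only [List.map_cons, List.sum_cons, ih]; push_cast; ring

lemma length_le_sum_ones (l : List ℕ) (h : ∀ x ∈ l, 1 ≤ x) : l.length ≤ l.sum := by
  induction l with
  | nil => simp
  | cons a l ih =>
    have h1 := h a (List.mem_cons_self)
    have h2 := ih (fun x hx => h x (List.mem_cons_of_mem _ hx))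
    simp only [List.length_cons, List.sum_cons]; omega

lemma flat_length_eq (π : LPS St) :
    π.flat.length = π.head.length + (π.segs.map (fun p => p.1.length + p.2.length)).sum := by
  simp [LPS.flat, List.length_flatten, List.map_map, Function.comp_def]

lemma cycle_len_le (π : LPS St) {z : List (OTrans St) × List (OTrans St)} (hz : z ∈ π.segs) :
    z.1.length ≤ π.flat.length := by
  rw [flat_length_eq]
  have hmem : z.1.length + z.2.length ∈ π.segs.map (fun p => p.1.length + p.2.length) :=
    List.mem_map_of_mem hz
  have := List.single_le_sum (l := π.segs.map fun p => p.1.length + p.2.length)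
    (fun x _ => Nat.zero_le x) _ hmem
  omega

lemma mem_flat_of_mem_head (π : LPS St) {t : OTrans St} (ht : t ∈ π.head) : t ∈ π.flat :=
  List.mem_append_left _ ht

lemma mem_flat_of_mem_cycle (π : LPS St) {z : List (OTrans St) × List (OTrans St)}
    (hz : z ∈ π.segs) {t : OTrans St} (ht : t ∈ z.1) : t ∈ π.flat := by
  refine List.mem_append_right _ ?_
  rw [List.mem_flatten]
  exact ⟨z.1 ++ z.2, List.mem_map_of_mem hz, List.mem_append_left _ ht⟩

lemma mem_flat_of_mem_alpha (π : LPS St) {z : List (OTrans St) × List (OTrans St)}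
    (hz : z ∈ π.segs) {t : OTrans St} (ht : t ∈ z.2) : t ∈ π.flat := by
  refine List.mem_append_right _ ?_
  rw [List.mem_flatten]
  exact ⟨z.1 ++ z.2, List.mem_map_of_mem hz, List.mem_append_right _ ht⟩

lemma mem_of_mem_listPow {α : Type} {t : α} {β : List α} {n : ℕ} (h : t ∈ listPow β n) :
    t ∈ β := by
  unfold listPow at h
  rw [List.mem_flatten] at h
  obtain ⟨w, hw, ht⟩ := h
  rwa [List.eq_of_mem_replicate hw] at ht

lemma mem_flat_of_mem_zipflatten (π : LPS St) (cs : List ℕ) {t : OTrans St}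
    (ht : t ∈ ((π.segs.zip cs).map (fun z => listPow z.1.1 z.2 ++ z.1.2)).flatten) :
    t ∈ π.flat := by
  rw [List.mem_flatten] at ht
  obtain ⟨w, hw, htw⟩ := ht
  rw [List.mem_map] at hw
  obtain ⟨z, hz, rfl⟩ := hw
  have hseg := (List.of_mem_zip hz).1
  rcases List.mem_append.mp htw with h | h
  · exact mem_flat_of_mem_cycle π hseg (mem_of_mem_listPow h)
  · exact mem_flat_of_mem_alpha π hseg h

lemma bigP_pos (b P' : ℕ) (hP' : 1 ≤ P') : 0 < bigP b P' := by
  unfold bigP lcmB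
  have h : 0 < (Finset.Icc 1 (2 * b ^ 3)).lcm id := by
    rcases Nat.eq_zero_or_pos ((Finset.Icc 1 (2 * b ^ 3)).lcm id) with h | h
    · rw [Finset.lcm_eq_zero_iff] at h; simp at h
    · exact h
  exact Nat.mul_pos h hP'

end Helpers

set_option maxHeartbeats 1000000 in
/-- (Lemma `SegmentsCycles`, item 2.) Let `τ` be a basic path
of `A`, or a prefix of one, valid from a configuration `(s, v)` with `v > cT`,
and let `i ≤ m`. If the length of `τ` is less than `𝔰_{i+1}(v)` (a vacuous
condition when `i = m`, since `𝔰_{m+1}(v) = ∞`) and some counter value along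
`τ` is at most `T′`, then `i ≥ 1` and `τ` contains `b⁴·P` consecutive
repetitions of a cycle `β` of length at most `b` whose slope equals `𝑒_j` for
some `1 ≤ j ≤ i`. -/
theorem segments_have_fast_cycles {St AP : Type} [Fintype St] (A : OCA St AP)
    (b : ℕ) (hb : 3 ≤ b)
    (hbasic : ∀ (c c' : St × ℕ) (ℓ : ℕ), A.ReachN ℓ c c' →
      ∃ τ : List (OTrans St), τ.length = ℓ ∧ A.IsBasic b τ c ∧ A.RunsTo τ c c')
    (T' P' : ℕ) (hP' : 1 ≤ P') (hT' : T' < bigP b P')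
    (s : St) (v : ℕ) (hv : cThresh b P' < v)
    (τ τ₀ : List (OTrans St)) (hpre : τ <+: τ₀) (hτ₀ : A.IsBasic b τ₀ (s, v))
    (i : ℕ) (hi : i ≤ numNegSlopes b)
    (hlen : i = numNegSlopes b ∨ (τ.length : ℤ) < segStart b T' P' v (i + 1))
    (hreach : ∃ (σ : List (OTrans St)) (c' : St × ℕ),
      σ <+: τ ∧ A.RunsTo σ (s, v) c' ∧ c'.2 ≤ T') :
    1 ≤ i ∧
    ∃ (β : List (OTrans St)) (j : ℕ),
      IsCycle β ∧ β.length ≤ b ∧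
      listPow β (b ^ 4 * bigP b P') <:+: τ ∧
      1 ≤ j ∧ j ≤ i ∧ slopeOf β = slopeE b j := by
  obtain ⟨σ, c', hσpre, hσrun, hc'T⟩ := hreach
  obtain ⟨π, cend, ⟨hdelta, hchain, hcycles⟩, hflatlen, ⟨cs, hcslen, hτ₀eq⟩, hτ₀run⟩ := hτ₀
  clear hbasic hτ₀run hchain
  -- numeric facts
  have hPpos : 0 < bigP b P' := bigP_pos b P' hP'
  have hb5 : 4 ≤ b ^ 5 := by
    calc (4 : ℕ) ≤ 3 ^ 5 := by norm_num
    _ ≤ b ^ 5 := Nat.pow_le_pow_left hb 5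
  have hu1 : b ≤ b ^ 6 * bigP b P' := by
    calc b = b * 1 := by ring
    _ ≤ b ^ 6 * bigP b P' :=
      Nat.mul_le_mul (Nat.le_self_pow (by norm_num) b) hPpos
  have hu2 : bigP b P' ≤ b ^ 6 * bigP b P' :=
    Nat.le_mul_of_pos_left _ (by positivity)
  have hu3 : 4 * (b ^ 6 * bigP b P') ≤ b ^ 11 * bigP b P' := by
    have h1 : b ^ 11 * bigP b P' = b ^ 5 * (b ^ 6 * bigP b P') := by ring
    rw [h1]
    exact Nat.mul_le_mul_right _ hb5
  have hN1 : b ^ 6 * bigP b P' + 2 * b + bigP b P' ≤ b ^ 11 * bigP b P' := by omega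
  have hN2 : b ^ 7 * bigP b P' + 2 * b ^ 2 ≤ b ^ 8 * bigP b P' := by
    have h1 : b ^ 2 ≤ b ^ 7 * bigP b P' := by
      calc b ^ 2 ≤ b ^ 7 := Nat.pow_le_pow_right (by omega) (by norm_num)
      _ = b ^ 7 * 1 := by ring
      _ ≤ b ^ 7 * bigP b P' := Nat.mul_le_mul_left _ hPpos
    have h2 : b ^ 8 * bigP b P' = b * (b ^ 7 * bigP b P') := by ring
    have h3 : 3 * (b ^ 7 * bigP b P') ≤ b * (b ^ 7 * bigP b P') :=
      Nat.mul_le_mul_right _ hb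
    omega
  have hvcT : b ^ 11 * bigP b P' < v := hv
  have hTP : T' < bigP b P' := hT'
  have hbZ : (3 : ℤ) ≤ (b : ℤ) := by exact_mod_cast hb
  have hcu1 : ((b : ℕ) : ℤ) ≤ ((b ^ 6 * bigP b P' : ℕ) : ℤ) := by exact_mod_cast hu1
  have hcu2 : ((bigP b P' : ℕ) : ℤ) ≤ ((b ^ 6 * bigP b P' : ℕ) : ℤ) := by exact_mod_cast hu2
  push_cast at hcu1 hcu2
  -- reduce to existence
  suffices hS : ∃ (β : List (OTrans St)) (j : ℕ),
      IsCycle β ∧ β.length ≤ b ∧ listPow β (b ^ 4 * bigP b P') <:+: τ ∧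
      1 ≤ j ∧ j ≤ i ∧ slopeOf β = slopeE b j by
    obtain ⟨β, j, h1, h2, h3, h4, h5, h6⟩ := hS
    exact ⟨le_trans h4 h5, β, j, h1, h2, h3, h4, h5, h6⟩
  by_contra hcon
  push_neg at hcon
  -- effect of σ
  have hflatbd : ∀ t ∈ π.flat, (-1 : ℤ) ≤ t.2.2.1 ∧ t.2.2.1 ≤ 1 := by
    intro t ht
    rcases A.effect_mem t (hdelta t ht) with h | h | h <;> omega
  have heffσ : (c'.2 : ℤ) = (v : ℤ) + effectOf σ := by
    have h := runsTo_counter A σ (s, v) c' hσrun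
    simpa using h
  have heffσ_le : effectOf σ ≤ (T' : ℤ) - (v : ℤ) := by
    have h : (c'.2 : ℤ) ≤ (T' : ℤ) := by exact_mod_cast hc'T
    omega
  have hheadlen : π.head.length ≤ b := by
    have := flat_length_eq π; omega
  -- decompose σ
  have hστ₀ : σ <+: τ₀ := hσpre.trans hpre
  rw [hτ₀eq] at hστ₀
  rcases prefix_append_cases hστ₀ with hcase | ⟨q, hσeq, hq⟩
  · -- σ is a prefix of the head: contradiction with the huge drop
    have h1 : -(σ.length : ℤ) ≤ effectOf σ :=
      effectOf_ge (fun t ht => (hflatbd t (mem_flat_of_mem_head π (hcase.subset ht))).1)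
    have h2 : σ.length ≤ b := le_trans hcase.length_le hheadlen
    have h3 : (σ.length : ℤ) ≤ (b : ℤ) := by exact_mod_cast h2
    have h4 : ((b ^ 11 * bigP b P' : ℕ) : ℤ) < (v : ℤ) := by exact_mod_cast hvcT
    have h5 : ((b ^ 6 * bigP b P' + 2 * b + bigP b P' : ℕ) : ℤ)
        ≤ ((b ^ 11 * bigP b P' : ℕ) : ℤ) := by exact_mod_cast hN1
    have h6 : (T' : ℤ) < ((bigP b P' : ℕ) : ℤ) := by exact_mod_cast hTP
    push_cast at h4 h5 h6
    linarith only [h1, h3, h4, h5, h6, heffσ_le, hbZ, hcu1, hcu2]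
  · -- σ = head ++ q
    obtain ⟨bl, hbl_len, hbl_mem, hbl_inf, hbl_eff, hbl_lensum⟩ :=
      master_decomp (π.segs.zip cs) q hq
        (fun t ht => (hflatbd t (mem_flat_of_mem_zipflatten π cs ht)).1)
    -- zs sum bound
    have hzsnat : ((π.segs.zip cs).map (fun z => z.1.1.length + z.1.2.length)).sum
        = (π.segs.map (fun p => p.1.length + p.2.length)).sum := by
      have hmapfst : (π.segs.zip cs).map Prod.fst = π.segs :=
        List.map_fst_zip (le_of_eq hcslen.symm)
      conv_rhs => rw [← hmapfst]
      rw [List.map_map]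
      rfl
    have hzs_le : ((π.segs.zip cs).map
        (fun z => ((z.1.1.length : ℤ) + (z.1.2.length : ℤ)))).sum ≤ (b : ℤ) := by
      rw [int_sum_map_len, hzsnat]
      have := flat_length_eq π
      have h2 : (π.segs.map (fun p => p.1.length + p.2.length)).sum ≤ b := by omega
      exact_mod_cast h2
    -- bl length bound
    have hbl_b : bl.length ≤ b := by
      have h1 : (π.segs.zip cs).length = π.segs.length := by
        rw [List.length_zip]; omega
      have h2 : π.segs.length ≤ (π.segs.map (fun p => p.1.length + p.2.length)).sum := by
        have h3 : π.segs.length = (π.segs.map (fun p => p.1.length + p.2.length)).length := by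
          simp
        rw [h3]
        apply length_le_sum_ones
        intro x hx
        rw [List.mem_map] at hx
        obtain ⟨z, hz, rfl⟩ := hx
        have := (hcycles z hz).1
        have := List.length_pos_iff.mpr this
        omega
      have := flat_length_eq π
      omega
    -- per-block facts
    have hblock : ∀ p ∈ bl, IsCycle p.1 ∧ 1 ≤ p.1.length ∧ p.1.length ≤ b ∧
        -(p.1.length : ℤ) ≤ effectOf p.1 ∧ effectOf p.1 ≤ (p.1.length : ℤ) ∧
        listPow p.1 p.2 <:+: τ := by
      intro p hp
      obtain ⟨z, hz, hpz, hpc⟩ := hbl_mem p hp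
      have hseg := (List.of_mem_zip hz).1
      have hcyc : IsCycle p.1 := by rw [hpz]; exact hcycles z.1 hseg
      have hlen1 : 1 ≤ p.1.length := List.length_pos_iff.mpr hcyc.1
      have hlenb : p.1.length ≤ b := by
        rw [hpz]; exact le_trans (cycle_len_le π hseg) hflatlen
      have hmemf : ∀ t ∈ p.1, t ∈ π.flat := by
        intro t ht
        exact mem_flat_of_mem_cycle π hseg (by rwa [hpz] at ht)
      have helo : -(p.1.length : ℤ) ≤ effectOf p.1 :=
        effectOf_ge (fun t ht => (hflatbd t (hmemf t ht)).1)
      have hehi : effectOf p.1 ≤ (p.1.length : ℤ) :=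
        effectOf_le (fun t ht => (hflatbd t (hmemf t ht)).2)
      have hqσ : q <:+ σ := ⟨π.head, hσeq.symm⟩
      have hinfτ : listPow p.1 p.2 <:+: τ :=
        ((hbl_inf p hp).trans hqσ.isInfix).trans hσpre.isInfix
      exact ⟨hcyc, hlen1, hlenb, helo, hehi, hinfτ⟩
    -- sorted list of basic slopes
    have hsorted := (Finset.sortedLT_sort (basicSlopes b)).pairwise
    have hmlen : numNegSlopes b ≤ ((basicSlopes b).sort (· ≤ ·)).length := by
      rw [numNegSlopes_eq_countP]; exact List.countP_le_length
    -- key dichotomy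
    have hkey : ∀ p ∈ bl, effectOf p.1 < 0 → b ^ 4 * bigP b P' ≤ p.2 →
        ∃ j', i ≤ j' ∧ j' < numNegSlopes b ∧
          slopeOf p.1 = ((basicSlopes b).sort (· ≤ ·)).getD j' 0 := by
      intro p hp heff hc
      obtain ⟨hcyc, hlen1, hlenb, helo, hehi, hinfτ⟩ := hblock p hp
      have hq0 : slopeOf p.1 < 0 := by
        apply div_neg_of_neg_of_pos
        · exact_mod_cast heff
        · exact_mod_cast hlen1
      have hmemBS : slopeOf p.1 ∈ basicSlopes b := by
        have h := mem_basicSlopes_of b (effectOf p.1) p.1.length hlen1 hlenb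
          (by rw [abs_le]; omega)
        simpa [slopeOf] using h
      obtain ⟨j', hj', hgetD⟩ := exists_index_of_neg hsorted
        ((Finset.mem_sort _).mpr hmemBS) hq0
      rw [← numNegSlopes_eq_countP] at hj'
      refine ⟨j', ?_, hj', hgetD.symm⟩
      by_contra hii
      push_neg at hii
      have hne : slopeOf p.1 ≠ slopeE b (j' + 1) :=
        hcon p.1 (j' + 1) hcyc hlenb
          (((listPow_prefix p.1 hc).isInfix).trans hinfτ) (by omega) (by omega)
      apply hne
      rw [← hgetD]
      simp [slopeE]
    -- Case A: i = m
    have hcaseA : i = numNegSlopes b → False := by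
      intro him
      have hpoint : ∀ p ∈ bl, -((b ^ 5 * bigP b P' : ℕ) : ℤ) ≤ (p.2 : ℤ) * effectOf p.1 := by
        intro p hp
        obtain ⟨hcyc, hlen1, hlenb, helo, hehi, _⟩ := hblock p hp
        rcases lt_or_ge (effectOf p.1) 0 with he | he
        · rcases lt_or_ge p.2 (b ^ 4 * bigP b P') with hc | hc
          · have h1 : (p.2 : ℤ) ≤ ((b ^ 4 * bigP b P' : ℕ) : ℤ) := by
              exact_mod_cast le_of_lt hc
            have h2 : (p.1.length : ℤ) ≤ (b : ℤ) := by exact_mod_cast hlenb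
            have h3 : ((b ^ 5 * bigP b P' : ℕ) : ℤ)
                = ((b ^ 4 * bigP b P' : ℕ) : ℤ) * (b : ℤ) := by push_cast; ring
            rw [h3]
            have e0 : (0 : ℤ) ≤ (p.2 : ℤ) := by positivity
            have e1 : (p.2 : ℤ) * (-(p.1.length : ℤ)) ≤ (p.2 : ℤ) * effectOf p.1 :=
              mul_le_mul_of_nonneg_left helo e0
            have e2 : (p.2 : ℤ) * (p.1.length : ℤ) ≤ ((b ^ 4 * bigP b P' : ℕ) : ℤ) * (b : ℤ) :=
              mul_le_mul h1 h2 (by positivity) (by positivity)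
            linarith only [e1, e2]
          · obtain ⟨j', hij', hj'm, _⟩ := hkey p hp he hc
            omega
        · have e0 : (0 : ℤ) ≤ (p.2 : ℤ) * effectOf p.1 := mul_nonneg (by positivity) he
          have e1 : (0 : ℤ) ≤ ((b ^ 5 * bigP b P' : ℕ) : ℤ) := by positivity
          linarith only [e0, e1]
      have hsum : -((b : ℤ) * ((b ^ 5 * bigP b P' : ℕ) : ℤ))
          ≤ (bl.map (fun p => (p.2 : ℤ) * effectOf p.1)).sum := by
        have h1 : (bl.map (fun _ => -((b ^ 5 * bigP b P' : ℕ) : ℤ))).sum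
            ≤ (bl.map (fun p => (p.2 : ℤ) * effectOf p.1)).sum :=
          List.sum_le_sum hpoint
        rw [sum_map_const_int] at h1
        have h2 : (bl.length : ℤ) ≤ (b : ℤ) := by exact_mod_cast hbl_b
        have h3 : (bl.length : ℤ) * ((b ^ 5 * bigP b P' : ℕ) : ℤ)
            ≤ (b : ℤ) * ((b ^ 5 * bigP b P' : ℕ) : ℤ) :=
          mul_le_mul_of_nonneg_right h2 (by positivity)
        linarith only [h1, h3]
      -- combine
      have hheadeff : -(b : ℤ) ≤ effectOf π.head := by
        have := effectOf_ge (l := π.head)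
          (fun t ht => (hflatbd t (mem_flat_of_mem_head π ht)).1)
        have h2 : (π.head.length : ℤ) ≤ (b : ℤ) := by exact_mod_cast hheadlen
        omega
      have hσq : effectOf σ = effectOf π.head + effectOf q := by
        rw [hσeq, effectOf_append]
      have h4 : ((b ^ 11 * bigP b P' : ℕ) : ℤ) < (v : ℤ) := by exact_mod_cast hvcT
      have h5 : ((b ^ 6 * bigP b P' + 2 * b + bigP b P' : ℕ) : ℤ)
          ≤ ((b ^ 11 * bigP b P' : ℕ) : ℤ) := by exact_mod_cast hN1
      have h6 : (T' : ℤ) < ((bigP b P' : ℕ) : ℤ) := by exact_mod_cast hTP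
      have hσq2 := heffσ_le
      push_cast at h4 h5 h6 hsum
      linarith only [hsum, hbl_eff, hzs_le, hheadeff, hσq, hσq2, h4, h5, h6, hbZ, hcu1, hcu2]
    rcases hlen with him | hlenB
    · exact hcaseA him
    by_cases him : i = numNegSlopes b
    · exact hcaseA him
    have him' : i < numNegSlopes b := by omega
    -- Case B
    have hil : i < ((basicSlopes b).sort (· ≤ ·)).length := lt_of_lt_of_le him' hmlen
    set e : ℚ := ((basicSlopes b).sort (· ≤ ·)).getD i 0 with hedef
    have he_neg : e < 0 := getD_neg_of_lt_countP hsorted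
      (by rw [← numNegSlopes_eq_countP]; exact him')
    have heBS : e ∈ basicSlopes b := by
      rw [hedef, List.getD_eq_getElem _ 0 hil]
      exact (Finset.mem_sort _).mp (List.getElem_mem _)
    have hrpos : (0 : ℚ) < -e := by linarith
    set X : ℤ := (-e).num with hXdef
    set Y : ℕ := (-e).den with hYdef
    have hX1 : 1 ≤ X := Rat.num_pos.mpr hrpos
    have hY1 : 1 ≤ Y := (-e).pos
    have hYb : Y ≤ b := by
      rw [hYdef, Rat.neg_den]
      exact den_le_of_mem_basicSlopes heBS
    -- per-block inequality
    have hpoint : ∀ p ∈ bl, (0 : ℤ) ≤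
        (Y : ℤ) * ((b ^ 5 * bigP b P' : ℕ) : ℤ)
          + X * ((p.2 : ℤ) * (p.1.length : ℤ))
          + (Y : ℤ) * ((p.2 : ℤ) * effectOf p.1) := by
      intro p hp
      obtain ⟨hcyc, hlen1, hlenb, helo, hehi, _⟩ := hblock p hp
      have hp2 : (0 : ℤ) ≤ (p.2 : ℤ) := by positivity
      have hYpos : (0 : ℤ) ≤ (Y : ℤ) := by positivity
      have hXterm : (0 : ℤ) ≤ X * ((p.2 : ℤ) * (p.1.length : ℤ)) := by positivity
      rcases lt_or_ge (effectOf p.1) 0 with he' | he'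
      · rcases lt_or_ge p.2 (b ^ 4 * bigP b P') with hc | hc
        · -- rare block
          have h1 : (p.2 : ℤ) ≤ ((b ^ 4 * bigP b P' : ℕ) : ℤ) := by
            exact_mod_cast le_of_lt hc
          have h2 : (p.1.length : ℤ) ≤ (b : ℤ) := by exact_mod_cast hlenb
          have e1 : (p.2 : ℤ) * (-(p.1.length : ℤ)) ≤ (p.2 : ℤ) * effectOf p.1 :=
            mul_le_mul_of_nonneg_left helo hp2
          have e2 : (p.2 : ℤ) * (p.1.length : ℤ) ≤ ((b ^ 4 * bigP b P' : ℕ) : ℤ) * (b : ℤ) :=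
            mul_le_mul h1 h2 (by positivity) (by positivity)
          have e3 : ((b ^ 5 * bigP b P' : ℕ) : ℤ)
              = ((b ^ 4 * bigP b P' : ℕ) : ℤ) * (b : ℤ) := by push_cast; ring
          have e4 : -((b ^ 5 * bigP b P' : ℕ) : ℤ) ≤ (p.2 : ℤ) * effectOf p.1 := by
            rw [e3]; linarith
          have e5 := mul_le_mul_of_nonneg_left e4 hYpos
          linarith only [e5, hXterm]
        · -- steep block: its slope is ≥ e
          obtain ⟨j', hij', hj'm, hslope⟩ := hkey p hp he' hc
          have hj'len : j' < ((basicSlopes b).sort (· ≤ ·)).length :=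
            lt_of_lt_of_le hj'm hmlen
          have hge : e ≤ slopeOf p.1 := by
            rw [hslope, hedef]
            exact getD_mono hsorted hij' hj'len
          have hlen0 : (0 : ℚ) < ((p.1.length : ℕ) : ℚ) := by exact_mod_cast hlen1
          have hY0 : (0 : ℚ) < ((Y : ℕ) : ℚ) := by exact_mod_cast hY1
          have hcross : -(effectOf p.1) * (Y : ℤ) ≤ X * (p.1.length : ℤ) := by
            have h1 : -(slopeOf p.1) ≤ -e := by linarith
            have h2 : -(slopeOf p.1) = ((-(effectOf p.1) : ℤ) : ℚ) / ((p.1.length : ℕ) : ℚ) := by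
              rw [slopeOf, ← neg_div]; push_cast; ring_nf
            have h3 : -e = ((X : ℤ) : ℚ) / ((Y : ℕ) : ℚ) := (Rat.num_div_den (-e)).symm
            rw [h2, h3, div_le_div_iff₀ hlen0 hY0] at h1
            exact_mod_cast h1
          -- multiply by p.2 ≥ 0
          have h4 : (p.2 : ℤ) * (-(effectOf p.1) * (Y : ℤ))
              ≤ (p.2 : ℤ) * (X * (p.1.length : ℤ)) :=
            mul_le_mul_of_nonneg_left hcross hp2
          have h5 : (0 : ℤ) ≤ (Y : ℤ) * ((b ^ 5 * bigP b P' : ℕ) : ℤ) := by positivity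
          linarith only [h4, h5, hXterm]
      · -- nonnegative-effect block
        have e0 : (0 : ℤ) ≤ (p.2 : ℤ) * effectOf p.1 := mul_nonneg hp2 he'
        have e1 : (0 : ℤ) ≤ (Y : ℤ) * ((p.2 : ℤ) * effectOf p.1) := mul_nonneg hYpos e0
        have h5 : (0 : ℤ) ≤ (Y : ℤ) * ((b ^ 5 * bigP b P' : ℕ) : ℤ) := by positivity
        linarith only [e1, h5, hXterm]
    -- sum the per-block inequalities
    have hsum0 : (0 : ℤ) ≤ (bl.map (fun p =>
        (Y : ℤ) * ((b ^ 5 * bigP b P' : ℕ) : ℤ)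
          + X * ((p.2 : ℤ) * (p.1.length : ℤ))
          + (Y : ℤ) * ((p.2 : ℤ) * effectOf p.1))).sum := by
      apply List.sum_nonneg
      intro x hx
      rw [List.mem_map] at hx
      obtain ⟨p, hp, rfl⟩ := hx
      exact hpoint p hp
    have hsplit : (bl.map (fun p =>
        (Y : ℤ) * ((b ^ 5 * bigP b P' : ℕ) : ℤ)
          + X * ((p.2 : ℤ) * (p.1.length : ℤ))
          + (Y : ℤ) * ((p.2 : ℤ) * effectOf p.1))).sum
        = (bl.length : ℤ) * ((Y : ℤ) * ((b ^ 5 * bigP b P' : ℕ) : ℤ))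
          + X * (bl.map (fun p => (p.2 : ℤ) * (p.1.length : ℤ))).sum
          + (Y : ℤ) * (bl.map (fun p => (p.2 : ℤ) * effectOf p.1)).sum := by
      rw [sum_map_add_int bl
        (fun p => (Y : ℤ) * ((b ^ 5 * bigP b P' : ℕ) : ℤ)
          + X * ((p.2 : ℤ) * (p.1.length : ℤ)))
        (fun p => (Y : ℤ) * ((p.2 : ℤ) * effectOf p.1)),
        sum_map_add_int bl
        (fun _ => (Y : ℤ) * ((b ^ 5 * bigP b P' : ℕ) : ℤ))
        (fun p => X * ((p.2 : ℤ) * (p.1.length : ℤ))),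
        sum_map_const_int, sum_map_mul_left_int, sum_map_mul_left_int]
    rw [hsplit] at hsum0
    -- bounds on the three sums
    have hSlen : (bl.map (fun p => (p.2 : ℤ) * (p.1.length : ℤ))).sum ≤ (τ.length : ℤ) := by
      have h1 : (q.length : ℤ) ≤ (τ.length : ℤ) := by
        have h2 : q.length ≤ σ.length := by rw [hσeq]; simp
        have h3 : σ.length ≤ τ.length := hσpre.length_le
        exact_mod_cast le_trans h2 h3
      linarith only [hbl_lensum, h1]
    have hSeff : (bl.map (fun p => (p.2 : ℤ) * effectOf p.1)).sum
        ≤ (T' : ℤ) - (v : ℤ) + 2 * (b : ℤ) := by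
      have hheadeff : -(b : ℤ) ≤ effectOf π.head := by
        have h := effectOf_ge (l := π.head)
          (fun t ht => (hflatbd t (mem_flat_of_mem_head π ht)).1)
        have h2 : (π.head.length : ℤ) ≤ (b : ℤ) := by exact_mod_cast hheadlen
        omega
      have hσq : effectOf σ = effectOf π.head + effectOf q := by
        rw [hσeq, effectOf_append]
      linarith only [hbl_eff, hzs_le, hheadeff, hσq, heffσ_le]
    -- segStart computation
    have hsegeq : segStart b T' P' v (i + 1)
        = ⌊(((Y : ℕ) : ℚ) * ((v : ℚ) - (T' : ℚ)) / ((X : ℤ) : ℚ))⌋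
          - (b : ℤ) ^ 8 * (bigP b P' : ℤ) := by
      unfold segStart
      rw [if_neg (by omega)]
      have hE : slopeE b (i + 1) = e := by
        unfold slopeE
        simpa using hedef.symm
      rw [hE, hXdef, hYdef]
    have hfloor : X * ⌊(((Y : ℕ) : ℚ) * ((v : ℚ) - (T' : ℚ)) / ((X : ℤ) : ℚ))⌋
        ≤ (Y : ℤ) * ((v : ℤ) - (T' : ℤ)) := by
      set θ : ℚ := ((Y : ℕ) : ℚ) * ((v : ℚ) - (T' : ℚ)) / ((X : ℤ) : ℚ) with hθ
      have hX0 : (0 : ℚ) < ((X : ℤ) : ℚ) := by exact_mod_cast hX1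
      have h1 : (⌊θ⌋ : ℚ) ≤ θ := Int.floor_le θ
      have h2 : ((X : ℤ) : ℚ) * (⌊θ⌋ : ℚ) ≤ ((X : ℤ) : ℚ) * θ :=
        mul_le_mul_of_nonneg_left h1 (le_of_lt hX0)
      have h3 : ((X : ℤ) : ℚ) * θ = ((Y : ℕ) : ℚ) * ((v : ℚ) - (T' : ℚ)) := by
        rw [hθ]; field_simp
      rw [h3] at h2
      have h4 : ((X * ⌊θ⌋ : ℤ) : ℚ) ≤ (((Y : ℤ) * ((v : ℤ) - (T' : ℤ)) : ℤ) : ℚ) := by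
        push_cast
        push_cast at h2
        linarith
      exact_mod_cast h4
    -- final contradiction
    rw [hsegeq] at hlenB
    have hτX : X * (τ.length : ℤ)
        ≤ (Y : ℤ) * ((v : ℤ) - (T' : ℤ)) - X * ((b : ℤ) ^ 8 * (bigP b P' : ℤ)) - X := by
      have h1 : (τ.length : ℤ)
          ≤ ⌊(((Y : ℕ) : ℚ) * ((v : ℚ) - (T' : ℚ)) / ((X : ℤ) : ℚ))⌋
            - (b : ℤ) ^ 8 * (bigP b P' : ℤ) - 1 := by linarith only [hlenB]
      have h2 : X * (τ.length : ℤ)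
          ≤ X * (⌊(((Y : ℕ) : ℚ) * ((v : ℚ) - (T' : ℚ)) / ((X : ℤ) : ℚ))⌋
            - (b : ℤ) ^ 8 * (bigP b P' : ℤ) - 1) :=
        mul_le_mul_of_nonneg_left h1 (by linarith only [hX1])
      have h3 : X * (⌊(((Y : ℕ) : ℚ) * ((v : ℚ) - (T' : ℚ)) / ((X : ℤ) : ℚ))⌋
            - (b : ℤ) ^ 8 * (bigP b P' : ℤ) - 1)
          = X * ⌊(((Y : ℕ) : ℚ) * ((v : ℚ) - (T' : ℚ)) / ((X : ℤ) : ℚ))⌋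
            - X * ((b : ℤ) ^ 8 * (bigP b P' : ℤ)) - X := by ring
      rw [h3] at h2
      linarith only [h2, hfloor]
    -- assemble
    have hXS : X * (bl.map (fun p => (p.2 : ℤ) * (p.1.length : ℤ))).sum
        ≤ X * (τ.length : ℤ) := mul_le_mul_of_nonneg_left hSlen (by linarith only [hX1])
    have hYS : (Y : ℤ) * (bl.map (fun p => (p.2 : ℤ) * effectOf p.1)).sum
        ≤ (Y : ℤ) * ((T' : ℤ) - (v : ℤ) + 2 * (b : ℤ)) :=
      mul_le_mul_of_nonneg_left hSeff (by positivity)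
    have hblY : (bl.length : ℤ) * ((Y : ℤ) * ((b ^ 5 * bigP b P' : ℕ) : ℤ))
        ≤ (b : ℤ) * ((b : ℤ) * ((b ^ 5 * bigP b P' : ℕ) : ℤ)) := by
      have h1 : (bl.length : ℤ) ≤ (b : ℤ) := by exact_mod_cast hbl_b
      have h2 : (Y : ℤ) ≤ (b : ℤ) := by exact_mod_cast hYb
      have h3 : (0 : ℤ) ≤ ((b ^ 5 * bigP b P' : ℕ) : ℤ) := by positivity
      have h4 : (Y : ℤ) * ((b ^ 5 * bigP b P' : ℕ) : ℤ)
          ≤ (b : ℤ) * ((b ^ 5 * bigP b P' : ℕ) : ℤ) := mul_le_mul_of_nonneg_right h2 h3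
      have h6 := mul_le_mul_of_nonneg_right h1
        (show (0 : ℤ) ≤ (Y : ℤ) * ((b ^ 5 * bigP b P' : ℕ) : ℤ) by positivity)
      have h7 := mul_le_mul_of_nonneg_left h4 (show (0 : ℤ) ≤ (b : ℤ) by positivity)
      exact h6.trans h7
    have hXb8 : X * ((b : ℤ) ^ 8 * (bigP b P' : ℤ))
        ≥ 1 * ((b : ℤ) ^ 8 * (bigP b P' : ℤ)) :=
      mul_le_mul_of_nonneg_right hX1 (by positivity)
    have hNum : ((b ^ 7 * bigP b P' + 2 * b ^ 2 : ℕ) : ℤ)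
        ≤ ((b ^ 8 * bigP b P' : ℕ) : ℤ) := by exact_mod_cast hN2
    have hYval : (1 : ℤ) ≤ (Y : ℤ) := by exact_mod_cast hY1
    have hYb' : (Y : ℤ) ≤ (b : ℤ) := by exact_mod_cast hYb
    have h2bY : 2 * (b : ℤ) * (Y : ℤ) ≤ 2 * (b : ℤ) * (b : ℤ) :=
      mul_le_mul_of_nonneg_left hYb' (by positivity)
    push_cast at hsum0 hXS hYS hblY hXb8 hNum hτX
    linarith only [hsum0, hXS, hYS, hblY, hXb8, hNum, hτX, hX1, hYval, hYb', h2bY]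
end
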